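/- Let m be a capacity on (X,𝒜), ▵ : m(𝒜)×m(𝒜) → m(𝒜) with a ▵ 0 = 0 ▵ a = 0 for all a ∈ m(𝒜), k ∈ (0,1], S₁,S₂,S₃ semicopulas, and ⋆,⊥ : [0,1]² → [0,1] nondecreasing with ⊥ left-continuous. Let φ₁ : [0,1] → [0,1] be nondecreasing and φ₂, φ₃ : [0,1] → [0,1] be increasing and right-continuous; let ψᵢ : [0,φᵢ(1)] → [0,1] be nondecreasing for i=1,2,3 with ψ₂, ψ₃ left-continuous. Assume condition (Z₁): for all c,d ∈ m(𝒜) there exist C,D ∈ 𝒜 with m(C)=c, m(D)=d and m(C∩D) = c ▵ d. If ψ₁(I_{S₁, A∩B}(φ₁(f⋆g))) ≥ ψ₂(I_{S₂, A}(φ₂(f))) ⊥ ψ₃(I_{S₃, B}(φ₃(g))) holds for all A,B ∈ 𝒜 and all f,g ∈ F^k such that f|_A and g|_B are m-positively dependent with respect to ▵, then ψ₁(S₁(φ₁(a⋆b), c▵d)) ≥ ψ₂(S₂(φ₂(a), c)) ⊥ ψ₃(S₃(φ₃(b), d)) for all a,b ∈ [0,k] and all c,d ∈ m(𝒜). -/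

import Mathlib

open Set ENNReal

noncomputable def uSugeno {X : Type*} (ybar : ℝ≥0∞) (op : ℝ≥0∞ → ℝ≥0∞ → ℝ≥0∞)
    (m : Set X → ℝ≥0∞) (D : Set X) (f : X → ℝ≥0∞) : ℝ≥0∞ :=
  ⨆ t ∈ Set.Iic ybar, op t (m (D ∩ {x | t ≤ f x}))

noncomputable def qInt {X : Type*} (oti : ℝ≥0∞ → ℝ≥0∞ → ℝ≥0∞)
    (m : Set X → ℝ≥0∞) (f : X → ℝ≥0∞) : ℝ≥0∞ :=
  ⨆ t ∈ Set.Iic (1 : ℝ≥0∞), oti (m {x | t ≤ f x}) t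

def Mono2On (op : ℝ≥0∞ → ℝ≥0∞ → ℝ≥0∞) (s t : Set ℝ≥0∞) : Prop :=
  ∀ ⦃a₁⦄, a₁ ∈ s → ∀ ⦃b₁⦄, b₁ ∈ t → ∀ ⦃a₂⦄, a₂ ∈ s → ∀ ⦃b₂⦄, b₂ ∈ t →
    a₁ ≤ a₂ → b₁ ≤ b₂ → op a₁ b₁ ≤ op a₂ b₂

def LeftContOn (g : ℝ≥0∞ → ℝ≥0∞) (s : Set ℝ≥0∞) : Prop :=
  ∀ x ∈ s, ContinuousWithinAt g (Set.Iic x) x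

def RightContOn (g : ℝ≥0∞ → ℝ≥0∞) (s : Set ℝ≥0∞) : Prop :=
  ∀ x ∈ s, ContinuousWithinAt g (Set.Ici x) x

def LeftCont2On (op : ℝ≥0∞ → ℝ≥0∞ → ℝ≥0∞) (s t : Set ℝ≥0∞) : Prop :=
  (∀ b ∈ t, ∀ a ∈ s, ContinuousWithinAt (fun x => op x b) (Set.Iic a) a) ∧
  (∀ a ∈ s, ∀ b ∈ t, ContinuousWithinAt (fun y => op a y) (Set.Iic b) b)

def mRange {X : Type*} [MeasurableSpace X] (m : Set X → ℝ≥0∞) : Set ℝ≥0∞ :=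
  {c | ∃ A : Set X, MeasurableSet A ∧ m A = c}

def MonotoneMeasure {X : Type*} [MeasurableSpace X] (m : Set X → ℝ≥0∞) : Prop :=
  m ∅ = 0 ∧ 0 < m Set.univ ∧
    ∀ ⦃A B : Set X⦄, MeasurableSet A → MeasurableSet B → A ⊆ B → m A ≤ m B

def IsCapacity {X : Type*} [MeasurableSpace X] (m : Set X → ℝ≥0∞) : Prop :=
  m ∅ = 0 ∧ m Set.univ = 1 ∧
    ∀ ⦃A B : Set X⦄, MeasurableSet A → MeasurableSet B → A ⊆ B → m A ≤ m B

def ComonotoneOn {X : Type*} (D : Set X) (f g : X → ℝ≥0∞) : Prop :=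
  ∀ x ∈ D, ∀ y ∈ D, f x < f y → g x ≤ g y

def IsSemicopula (S : ℝ≥0∞ → ℝ≥0∞ → ℝ≥0∞) : Prop :=
  Mono2On S (Set.Iic 1) (Set.Iic 1) ∧
    ∀ a ∈ Set.Iic (1 : ℝ≥0∞), S a 1 = a ∧ S 1 a = a

def MPosDep {X : Type*} (m : Set X → ℝ≥0∞) (tri : ℝ≥0∞ → ℝ≥0∞ → ℝ≥0∞)
    (k : ℝ≥0∞) (A B : Set X) (f g : X → ℝ≥0∞) : Prop :=
  ∀ α ∈ Set.Iic k, ∀ β ∈ Set.Iic k,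
    tri (m (A ∩ {x | α ≤ f x})) (m (B ∩ {x | β ≤ g x})) ≤
      m (A ∩ B ∩ {x | α ≤ f x} ∩ {x | β ≤ g x})

lemma uSugeno_const {X : Type*} (S : ℝ≥0∞ → ℝ≥0∞ → ℝ≥0∞) (hS : IsSemicopula S)
    (m : Set X → ℝ≥0∞) (E : Set X) (v e : ℝ≥0∞) (hv : v ≤ 1) (he : e ≤ 1)
    (hE : m E = e) (hm0 : m ∅ = 0) :
    uSugeno 1 S m E (fun _ => v) = S v e := by
  obtain ⟨hmono, hunit⟩ := hS
  have h10 : S 1 0 = 0 := (hunit 0 (by simp)).2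
  apply le_antisymm
  · refine iSup₂_le fun t ht => ?_
    by_cases h : t ≤ v
    · have hu : {x : X | t ≤ v} = Set.univ := Set.eq_univ_of_forall fun x => h
      rw [hu, Set.inter_univ, hE]
      exact hmono (Set.mem_Iic.mpr ht) (Set.mem_Iic.mpr he) (Set.mem_Iic.mpr hv)
        (Set.mem_Iic.mpr he) h le_rfl
    · have hu : {x : X | t ≤ v} = (∅ : Set X) := by
        ext x; simp [h]
      rw [hu, Set.inter_empty, hm0]
      calc S t 0 ≤ S 1 0 :=
            hmono (Set.mem_Iic.mpr ht) (Set.mem_Iic.mpr zero_le)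
              (Set.mem_Iic.mpr le_rfl) (Set.mem_Iic.mpr zero_le) ht le_rfl
        _ = 0 := h10
        _ ≤ S v e := zero_le
  · have hu : {x : X | v ≤ v} = Set.univ := Set.eq_univ_of_forall fun x => show v ≤ v from le_rfl
    have key : S v (m (E ∩ {x : X | v ≤ v})) = S v e := by rw [hu, Set.inter_univ, hE]
    calc S v e = S v (m (E ∩ {x : X | v ≤ v})) := key.symm
      _ ≤ ⨆ t ∈ Set.Iic (1:ℝ≥0∞), S t (m (E ∩ {x : X | t ≤ v})) :=
          le_biSup (fun t => S t (m (E ∩ {x : X | t ≤ v}))) (Set.mem_Iic.mpr hv)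

theorem statement8 {X : Type*} [MeasurableSpace X]
    (m : Set X → ℝ≥0∞) (hm : IsCapacity m)
    (tri : ℝ≥0∞ → ℝ≥0∞ → ℝ≥0∞)
    (htri_maps : ∀ c ∈ mRange m, ∀ d ∈ mRange m, tri c d ∈ mRange m)
    (htri_zero : ∀ a ∈ mRange m, tri a 0 = 0 ∧ tri 0 a = 0)
    (k : ℝ≥0∞) (hk0 : 0 < k) (hk1 : k ≤ 1)
    (S₁ S₂ S₃ : ℝ≥0∞ → ℝ≥0∞ → ℝ≥0∞)
    (hS₁ : IsSemicopula S₁) (hS₂ : IsSemicopula S₂) (hS₃ : IsSemicopula S₃)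
    (star bot : ℝ≥0∞ → ℝ≥0∞ → ℝ≥0∞)
    (hstar_maps : ∀ a ∈ Set.Iic (1 : ℝ≥0∞), ∀ b ∈ Set.Iic (1 : ℝ≥0∞), star a b ∈ Set.Iic 1)
    (hstar_mono : Mono2On star (Set.Iic 1) (Set.Iic 1))
    (hbot_maps : ∀ a ∈ Set.Iic (1 : ℝ≥0∞), ∀ b ∈ Set.Iic (1 : ℝ≥0∞), bot a b ∈ Set.Iic 1)
    (hbot_mono : Mono2On bot (Set.Iic 1) (Set.Iic 1))
    (hbot_lc : LeftCont2On bot (Set.Iic 1) (Set.Iic 1))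
    (φ₁ φ₂ φ₃ : ℝ≥0∞ → ℝ≥0∞)
    (hφ₁_maps : Set.MapsTo φ₁ (Set.Iic 1) (Set.Iic 1))
    (hφ₁_mono : MonotoneOn φ₁ (Set.Iic 1))
    (hφ₂_maps : Set.MapsTo φ₂ (Set.Iic 1) (Set.Iic 1))
    (hφ₂_mono : StrictMonoOn φ₂ (Set.Iic 1))
    (hφ₂_rc : RightContOn φ₂ (Set.Iic 1))
    (hφ₃_maps : Set.MapsTo φ₃ (Set.Iic 1) (Set.Iic 1))
    (hφ₃_mono : StrictMonoOn φ₃ (Set.Iic 1))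
    (hφ₃_rc : RightContOn φ₃ (Set.Iic 1))
    (ψ₁ ψ₂ ψ₃ : ℝ≥0∞ → ℝ≥0∞)
    (hψ₁_maps : Set.MapsTo ψ₁ (Set.Iic (φ₁ 1)) (Set.Iic 1))
    (hψ₁_mono : MonotoneOn ψ₁ (Set.Iic (φ₁ 1)))
    (hψ₂_maps : Set.MapsTo ψ₂ (Set.Iic (φ₂ 1)) (Set.Iic 1))
    (hψ₂_mono : MonotoneOn ψ₂ (Set.Iic (φ₂ 1)))
    (hψ₂_lc : LeftContOn ψ₂ (Set.Iic (φ₂ 1)))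
    (hψ₃_maps : Set.MapsTo ψ₃ (Set.Iic (φ₃ 1)) (Set.Iic 1))
    (hψ₃_mono : MonotoneOn ψ₃ (Set.Iic (φ₃ 1)))
    (hψ₃_lc : LeftContOn ψ₃ (Set.Iic (φ₃ 1)))
    (hZ₁ : ∀ c ∈ mRange m, ∀ d ∈ mRange m, ∃ C D : Set X,
      MeasurableSet C ∧ MeasurableSet D ∧ m C = c ∧ m D = d ∧ m (C ∩ D) = tri c d)
    (hcheb : ∀ (A B : Set X), MeasurableSet A → MeasurableSet B →
      ∀ (f g : X → ℝ≥0∞), Measurable f → Measurable g →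
        (∀ x, f x ≤ k) → (∀ x, g x ≤ k) → MPosDep m tri k A B f g →
          bot (ψ₂ (uSugeno 1 S₂ m A fun x => φ₂ (f x)))
              (ψ₃ (uSugeno 1 S₃ m B fun x => φ₃ (g x)))
            ≤ ψ₁ (uSugeno 1 S₁ m (A ∩ B) fun x => φ₁ (star (f x) (g x)))) :
    ∀ a ∈ Set.Iic k, ∀ b ∈ Set.Iic k, ∀ c ∈ mRange m, ∀ d ∈ mRange m,
      bot (ψ₂ (S₂ (φ₂ a) c)) (ψ₃ (S₃ (φ₃ b) d)) ≤
        ψ₁ (S₁ (φ₁ (star a b)) (tri c d)) := by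
  intro a ha b hb c hc d hd
  obtain ⟨C, D, hC, hD, hmC, hmD, hmCD⟩ := hZ₁ c hc d hd
  have hm0 : m ∅ = 0 := hm.1
  have hmuniv : m Set.univ = 1 := hm.2.1
  have hmono := hm.2.2
  have hc1 : c ≤ 1 := by
    rw [← hmC, ← hmuniv]; exact hmono hC MeasurableSet.univ (Set.subset_univ C)
  have hd1 : d ≤ 1 := by
    rw [← hmD, ← hmuniv]; exact hmono hD MeasurableSet.univ (Set.subset_univ D)
  have htcd1 : tri c d ≤ 1 := by
    rw [← hmCD, ← hmuniv]
    exact hmono (hC.inter hD) MeasurableSet.univ (Set.subset_univ _)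
  have ha1 : (a : ℝ≥0∞) ≤ 1 := le_trans ha hk1
  have hb1 : (b : ℝ≥0∞) ≤ 1 := le_trans hb hk1
  have hstarab : star a b ≤ 1 := hstar_maps a ha1 b hb1
  have hφ₂a : φ₂ a ≤ 1 := hφ₂_maps ha1
  have hφ₃b : φ₃ b ≤ 1 := hφ₃_maps hb1
  have hφ₁s : φ₁ (star a b) ≤ 1 := hφ₁_maps hstarab
  have h0mem : (0 : ℝ≥0∞) ∈ mRange m := ⟨∅, MeasurableSet.empty, hm0⟩
  have hU : ∀ t w : ℝ≥0∞, t ≤ w → {x : X | t ≤ w} = Set.univ :=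
    fun t w h => Set.eq_univ_of_forall fun x => h
  have hE : ∀ t w : ℝ≥0∞, ¬ t ≤ w → {x : X | t ≤ w} = (∅ : Set X) :=
    fun t w h => by ext x; simp [h]
  have hpos : MPosDep m tri k C D (fun _ => a) (fun _ => b) := by
    intro α hα β hβ
    by_cases hαa : α ≤ a <;> by_cases hβb : β ≤ b
    · simp only [hU α a hαa, hU β b hβb, Set.inter_univ, hmC, hmD, hmCD, le_refl]
    · simp only [hU α a hαa, hE β b hβb, Set.inter_univ, Set.inter_empty, hm0, hmC,
        (htri_zero c hc).1, le_refl]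
    · simp only [hE α a hαa, hU β b hβb, Set.inter_univ, Set.inter_empty, Set.empty_inter,
        hm0, hmD, (htri_zero d hd).2, le_refl]
    · simp only [hE α a hαa, hE β b hβb, Set.inter_empty, Set.empty_inter, hm0,
        (htri_zero 0 h0mem).1, le_refl]
  have h1 := uSugeno_const S₂ hS₂ m C (φ₂ a) c hφ₂a hc1 hmC hm0
  have h2 := uSugeno_const S₃ hS₃ m D (φ₃ b) d hφ₃b hd1 hmD hm0
  have h3 := uSugeno_const S₁ hS₁ m (C ∩ D) (φ₁ (star a b)) (tri c d) hφ₁s htcd1 hmCD hm0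
  have key := hcheb C D hC hD (fun _ => a) (fun _ => b) measurable_const measurable_const
    (fun _ => ha) (fun _ => hb) hpos
  rw [h1, h2, h3] at key
  exact key
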